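/- Let R be a commutative ring and A = [[a,b],[c,d]] ∈ M₂(R). A is simply extendable (there exists a 3×3 matrix over R of determinant 1 whose upper-left 2×2 block is A and whose (3,3) entry is 0) if and only if there exists (x,y,z,w) ∈ R⁴ such that axw + bxz + cyw + dyz = 1. -/
import Mathlib

open Matrix

theorem stmt6 {R : Type*} [CommRing R] (a b c d : R) :
    (∃ x y z w : R, (!![a, b, y; c, d, -x; -z, w, 0] : Matrix (Fin 3) (Fin 3) R).det = 1) ↔
      ∃ x y z w : R, a * x * w + b * x * z + c * y * w + d * y * z = 1 := by
  constructor
  · rintro ⟨x, y, z, w, h⟩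
    exact ⟨x, y, z, w, by simp [Matrix.det_fin_three] at h; linear_combination h⟩
  · rintro ⟨x, y, z, w, h⟩
    exact ⟨x, y, z, w, by simp [Matrix.det_fin_three]; linear_combination h⟩
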